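/- (Theorem 2.3, third identity, q-case.) Let n ∈ ℕ, β₁, β₂ ∈ (0,1) and let m₂ be a natural number with m₂ ≤ n. Then ∑_{x₂=m₂}^{n} ∑_{x₁=0}^{n−x₂} [x₂]_{m₂,q} · u(x₁,x₂) / ∏_{i=1}^{m₂} (1 − β₁·q^{n−m₂−x₁+i−1}) = [n]_{m₂,q} · β₂^{m₂}. (Note that in the range of summation the exponents n−m₂−x₁+i−1 are nonnegative, and the omitted terms with x₂ < m₂ would carry the vanishing factor [x₂]_{m₂,q} = 0.) -/

import Mathlib

open Finset

/-- q-integer `[k]_q = (1 - q^k)/(1 - q)`. -/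
noncomputable def qInt (q : ℝ) (k : ℤ) : ℝ := (1 - q ^ k) / (1 - q)

/-- q-factorial `[n]_q! = ∏_{i=1}^n [i]_q`. -/
noncomputable def qFact (q : ℝ) (n : ℕ) : ℝ := ∏ i ∈ Finset.Icc 1 n, qInt q (i : ℤ)

/-- q-binomial coefficient `C_q(n,k)`. -/
noncomputable def qBinom (q : ℝ) (n k : ℕ) : ℝ := qFact q n / (qFact q k * qFact q (n - k))

/-- q-falling factorial `[u]_{m,q} = ∏_{i=1}^m [u-i+1]_q`. -/
noncomputable def qFall (q : ℝ) (u : ℤ) (m : ℕ) : ℝ := ∏ i ∈ Finset.Icc 1 m, qInt q (u - (i : ℤ) + 1)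

/-- `[k]_{q⁻¹} = q^{1-k} · [k]_q`. -/
noncomputable def qIntInv (q : ℝ) (k : ℤ) : ℝ := q ^ (1 - k) * qInt q k

/-- `[u]_{m,q⁻¹} = ∏_{i=1}^m [u-i+1]_{q⁻¹}`. -/
noncomputable def qFallInv (q : ℝ) (u : ℤ) (m : ℕ) : ℝ := ∏ i ∈ Finset.Icc 1 m, qIntInv q (u - (i : ℤ) + 1)

/-- `b(k) = k(k-1)/2`. -/
def bb (k : ℕ) : ℕ := k * (k - 1) / 2

/-- `⟨1 ⊕ α⟩_m = ∏_{i=1}^m (1 + α q^{i-1})`. -/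
noncomputable def oplus (q α : ℝ) (m : ℕ) : ℝ := ∏ i ∈ Finset.Icc 1 m, (1 + α * q ^ (i - 1))

/-- `⟨1 ⊖ β⟩_m = ∏_{i=1}^m (1 - β q^{i-1})`. -/
noncomputable def ominus (q β : ℝ) (m : ℕ) : ℝ := ∏ i ∈ Finset.Icc 1 m, (1 - β * q ^ (i - 1))

/-- q-trinomial coefficient `T_q(n; x₁, x₂)`. -/
noncomputable def qTri (q : ℝ) (n x1 x2 : ℕ) : ℝ :=
  qFact q n / (qFact q x1 * qFact q x2 * qFact q (n - x1 - x2))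

/-- pmf of the q-trinomial distribution of the second kind. -/
noncomputable def upmf (q b1 b2 : ℝ) (n x1 x2 : ℕ) : ℝ :=
  qTri q n x1 x2 * b1 ^ x1 * b2 ^ x2 * ominus q b1 (n - x1) * ominus q b2 (n - x1 - x2)

lemma qInt_nat_pos {q : ℝ} (hq0 : 0 < q) (hq1 : q < 1) {k : ℕ} (hk : 1 ≤ k) :
    0 < qInt q (k : ℤ) := by
  unfold qInt
  rw [zpow_natCast]
  have h : q ^ k < 1 := pow_lt_one₀ hq0.le hq1 (by omega)
  apply div_pos <;> linarith

lemma qFact_pos {q : ℝ} (hq0 : 0 < q) (hq1 : q < 1) (n : ℕ) : 0 < qFact q n :=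
  Finset.prod_pos fun i hi => qInt_nat_pos hq0 hq1 (mem_Icc.mp hi).1

lemma qFact_zero (q : ℝ) : qFact q 0 = 1 := by simp [qFact]

lemma qFact_succ (q : ℝ) (n : ℕ) : qFact q (n + 1) = qFact q n * qInt q ((n + 1 : ℕ) : ℤ) :=
  Finset.prod_Icc_succ_top (by omega) _

lemma ominus_succ (q β : ℝ) (m : ℕ) : ominus q β (m + 1) = ominus q β m * (1 - β * q ^ m) := by
  rw [ominus, Finset.prod_Icc_succ_top (by omega)]
  simp [ominus]

lemma ominus_add (q β : ℝ) (a m : ℕ) :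
    ominus q β (a + m) = ominus q β a * ∏ i ∈ Finset.Icc 1 m, (1 - β * q ^ (a + i - 1)) := by
  induction m with
  | zero => simp
  | succ m ih =>
    rw [show a + (m + 1) = (a + m) + 1 by omega, ominus_succ, ih,
      Finset.prod_Icc_succ_top (by omega : 1 ≤ m + 1)]
    rw [show a + (m + 1) - 1 = a + m by omega]
    ring

lemma ominus_pos {q β : ℝ} (hq0 : 0 < q) (hq1 : q < 1) (hβ0 : 0 < β) (hβ1 : β < 1) (m : ℕ) :
    0 < ominus q β m := by
  apply Finset.prod_pos
  intro i _
  have h1 : q ^ (i - 1) ≤ 1 := pow_le_one₀ hq0.le hq1.le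
  nlinarith

lemma qFall_mul {q : ℝ} {m u : ℕ} (h : m ≤ u) :
    qFall q (u : ℤ) m * qFact q (u - m) = qFact q u := by
  induction m with
  | zero => simp [qFall]
  | succ m ih =>
    have hm : m ≤ u := by omega
    rw [qFall, Finset.prod_Icc_succ_top (by omega : 1 ≤ m + 1), ← qFall]
    have h1 : (u : ℤ) - (↑(m + 1) : ℤ) + 1 = ((u - m : ℕ) : ℤ) := by
      push_cast; omega
    have h2 : u - m = (u - (m + 1)) + 1 := by omega
    have h4 : qFact q (u - m) = qFact q (u - (m + 1)) * qInt q ((u - m : ℕ) : ℤ) := by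
      conv_lhs => rw [h2]
      rw [qFact_succ, ← h2]
    rw [h1, ← ih hm, h4]
    ring

lemma qFact_ne_zero {q : ℝ} (hq0 : 0 < q) (hq1 : q < 1) (n : ℕ) : qFact q n ≠ 0 :=
  (qFact_pos hq0 hq1 n).ne'

lemma qBinom_zero {q : ℝ} (hq0 : 0 < q) (hq1 : q < 1) (n : ℕ) : qBinom q n 0 = 1 := by
  unfold qBinom
  rw [qFact_zero, Nat.sub_zero, one_mul, div_self (qFact_ne_zero hq0 hq1 n)]

lemma qBinom_self {q : ℝ} (hq0 : 0 < q) (hq1 : q < 1) (n : ℕ) : qBinom q n n = 1 := by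
  unfold qBinom
  rw [Nat.sub_self, qFact_zero, mul_one, div_self (qFact_ne_zero hq0 hq1 n)]

lemma qInt_nat_add {q : ℝ} (hq1 : q < 1) (j k : ℕ) :
    qInt q ((j + k : ℕ) : ℤ) = qInt q (j : ℤ) + q ^ j * qInt q (k : ℤ) := by
  unfold qInt
  rw [zpow_natCast, zpow_natCast, zpow_natCast, pow_add]
  have h : (1 : ℝ) - q ≠ 0 := by linarith
  field_simp
  ring

lemma qBinom_pascal {q : ℝ} (hq0 : 0 < q) (hq1 : q < 1) (M a : ℕ) (h : a + 1 ≤ M) :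
    qBinom q (M + 1) (a + 1) = qBinom q M (a + 1) + q ^ (M - a) * qBinom q M a := by
  have hc : 1 ≤ M - a := by omega
  set c := M - a with hcdef
  unfold qBinom
  rw [show M + 1 - (a + 1) = c by omega, show M - (a + 1) = c - 1 by omega,
    ← hcdef]
  have e1 : qFact q (M + 1) = qFact q M * qInt q ((M + 1 : ℕ) : ℤ) := qFact_succ q M
  have e2 : qFact q (a + 1) = qFact q a * qInt q ((a + 1 : ℕ) : ℤ) := qFact_succ q a
  have e3 : qFact q c = qFact q (c - 1) * qInt q ((c : ℕ) : ℤ) := by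
    conv_lhs => rw [show c = (c - 1) + 1 by omega]
    rw [qFact_succ, show c - 1 + 1 = c by omega]
  have e4 : qInt q ((M + 1 : ℕ) : ℤ) = qInt q (c : ℤ) + q ^ c * qInt q ((a + 1 : ℕ) : ℤ) := by
    have := qInt_nat_add (q := q) hq1 c (a + 1)
    rwa [show c + (a + 1) = M + 1 by omega] at this
  rw [e1, e2, e3, e4]
  have hIk : qInt q ((a + 1 : ℕ) : ℤ) ≠ 0 := (qInt_nat_pos hq0 hq1 (by omega)).ne'
  have hIc : qInt q ((c : ℕ) : ℤ) ≠ 0 := (qInt_nat_pos hq0 hq1 hc).ne'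
  have hFa := qFact_ne_zero hq0 hq1 a
  have hFc := qFact_ne_zero hq0 hq1 (c - 1)
  generalize qInt q ((a + 1 : ℕ) : ℤ) = Ik at hIk ⊢
  generalize qInt q ((c : ℕ) : ℤ) = Ic at hIc ⊢
  generalize qFact q a = Fa at hFa ⊢
  generalize qFact q (c - 1) = Fc1 at hFc ⊢
  field_simp

lemma binomS {q : ℝ} (hq0 : 0 < q) (hq1 : q < 1) (β : ℝ) (M : ℕ) :
    ∑ k ∈ Finset.range (M + 1), qBinom q M k * β ^ k * ominus q β (M - k) = 1 := by
  induction M with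
  | zero =>
    simp [qBinom_zero hq0 hq1, ominus]
  | succ M ih =>
    have decomp :
        ∑ k ∈ Finset.range (M + 2), qBinom q (M + 1) k * β ^ k * ominus q β (M + 1 - k)
          = ∑ k ∈ Finset.range (M + 1),
              (qBinom q M k * β ^ k * ominus q β (M + 1 - k)
               + q ^ (M - k) * qBinom q M k * β ^ (k + 1) * ominus q β (M - k)) := by
      rw [Finset.sum_range_succ' (fun k => qBinom q (M + 1) k * β ^ k * ominus q β (M + 1 - k)) (M + 1)]
      rw [Finset.sum_range_succ (fun j => qBinom q (M + 1) (j + 1) * β ^ (j + 1) * ominus q β (M + 1 - (j + 1))) M]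
      rw [Finset.sum_add_distrib]
      rw [Finset.sum_range_succ' (fun k => qBinom q M k * β ^ k * ominus q β (M + 1 - k)) M]
      rw [Finset.sum_range_succ (fun k => q ^ (M - k) * qBinom q M k * β ^ (k + 1) * ominus q β (M - k)) M]
      have hedge1 : qBinom q (M + 1) (M + 1) * β ^ (M + 1) * ominus q β (M + 1 - (M + 1))
          = q ^ (M - M) * qBinom q M M * β ^ (M + 1) * ominus q β (M - M) := by
        rw [qBinom_self hq0 hq1, qBinom_self hq0 hq1, Nat.sub_self, Nat.sub_self]
        ring
      have hedge0 : qBinom q (M + 1) 0 * β ^ 0 * ominus q β (M + 1 - 0)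
          = qBinom q M 0 * β ^ 0 * ominus q β (M + 1 - 0) := by
        rw [qBinom_zero hq0 hq1, qBinom_zero hq0 hq1]
      have hmid : ∀ j ∈ Finset.range M,
          qBinom q (M + 1) (j + 1) * β ^ (j + 1) * ominus q β (M + 1 - (j + 1))
            = qBinom q M (j + 1) * β ^ (j + 1) * ominus q β (M + 1 - (j + 1))
              + q ^ (M - j) * qBinom q M j * β ^ (j + 1) * ominus q β (M - j) := by
        intro j hj
        have hj' : j + 1 ≤ M := Finset.mem_range.mp hj
        rw [qBinom_pascal hq0 hq1 M j hj', show M + 1 - (j + 1) = M - j by omega]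
        ring
      rw [Finset.sum_congr rfl hmid, Finset.sum_add_distrib, hedge0, hedge1]
      ring
    rw [decomp, ← ih]
    apply Finset.sum_congr rfl
    intro k hk
    have hk' : k ≤ M := Nat.lt_succ_iff.mp (Finset.mem_range.mp hk)
    rw [show M + 1 - k = (M - k) + 1 by omega, ominus_succ]
    ring

lemma key_term {q β1 β2 : ℝ} (hq0 : 0 < q) (hq1 : q < 1) (hβ1 : 0 < β1) (hβ1' : β1 < 1)
    (n m2 x1 y : ℕ) (hm2 : m2 ≤ n) (hxy : x1 + y ≤ n - m2) :
    qFall q ((m2 + y : ℕ) : ℤ) m2 * upmf q β1 β2 n x1 (m2 + y) /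
        ∏ i ∈ Finset.Icc 1 m2, (1 - β1 * q ^ (n - m2 - x1 + i - 1))
    = (qFall q (n : ℤ) m2 * β2 ^ m2) *
      (qBinom q (n - m2) x1 * β1 ^ x1 * ominus q β1 (n - m2 - x1)) *
      (qBinom q (n - m2 - x1) y * β2 ^ y * ominus q β2 (n - m2 - x1 - y)) := by
  have hPpos : 0 < ∏ i ∈ Finset.Icc 1 m2, (1 - β1 * q ^ (n - m2 - x1 + i - 1)) := by
    apply Finset.prod_pos
    intro i _
    have h1 : q ^ (n - m2 - x1 + i - 1) ≤ 1 := pow_le_one₀ hq0.le hq1.le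
    nlinarith
  have e5 : qFall q ((m2 + y : ℕ) : ℤ) m2 = qFact q (m2 + y) / qFact q y := by
    rw [eq_div_iff (qFact_ne_zero hq0 hq1 y)]
    have := qFall_mul (q := q) (show m2 ≤ m2 + y by omega)
    rwa [show m2 + y - m2 = y by omega] at this
  have e6 : qFall q (n : ℤ) m2 = qFact q n / qFact q (n - m2) := by
    rw [eq_div_iff (qFact_ne_zero hq0 hq1 (n - m2))]
    exact qFall_mul (q := q) hm2
  unfold upmf qTri qBinom
  rw [show n - x1 - (m2 + y) = n - m2 - x1 - y by omega,
    show n - x1 = (n - m2 - x1) + m2 by omega, ominus_add, e5, e6]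
  have hFmy := qFact_ne_zero hq0 hq1 (m2 + y)
  have hFy := qFact_ne_zero hq0 hq1 y
  have hFn := qFact_ne_zero hq0 hq1 n
  have hFN := qFact_ne_zero hq0 hq1 (n - m2)
  have hFx1 := qFact_ne_zero hq0 hq1 x1
  have hFc := qFact_ne_zero hq0 hq1 (n - m2 - x1)
  have hFd := qFact_ne_zero hq0 hq1 (n - m2 - x1 - y)
  have hP : (∏ i ∈ Finset.Icc 1 m2, (1 - β1 * q ^ (n - m2 - x1 + i - 1))) ≠ 0 := hPpos.ne'
  generalize (∏ i ∈ Finset.Icc 1 m2, (1 - β1 * q ^ (n - m2 - x1 + i - 1))) = P at hP ⊢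
  generalize qFact q (m2 + y) = Fmy at hFmy ⊢
  generalize qFact q y = Fy at hFy ⊢
  generalize qFact q n = Fn at hFn ⊢
  generalize qFact q (n - m2) = FN at hFN ⊢
  generalize qFact q x1 = Fx1 at hFx1 ⊢
  generalize qFact q (n - m2 - x1) = Fc at hFc ⊢
  generalize qFact q (n - m2 - x1 - y) = Fd at hFd ⊢
  generalize ominus q β1 (n - m2 - x1) = O1 
  generalize ominus q β2 (n - m2 - x1 - y) = O2
  field_simp
  ring

theorem stmt12 (q : ℝ) (hq0 : 0 < q) (hq1 : q < 1) (n : ℕ) (β1 β2 : ℝ)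
    (hβ1 : 0 < β1) (hβ1' : β1 < 1) (hβ2 : 0 < β2) (hβ2' : β2 < 1)
    (m2 : ℕ) (hm2 : m2 ≤ n) :
    ∑ x2 ∈ Finset.Icc m2 n, ∑ x1 ∈ Finset.range (n - x2 + 1),
      qFall q (x2 : ℤ) m2 * upmf q β1 β2 n x1 x2 /
        ∏ i ∈ Finset.Icc 1 m2, (1 - β1 * q ^ (n - m2 - x1 + i - 1))
      = qFall q (n : ℤ) m2 * β2 ^ m2 := by
  rw [Finset.sum_comm' (t' := Finset.range (n - m2 + 1)) (s' := fun x1 => Finset.Icc m2 (n - x1))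
    (by intro x2 x1; simp only [Finset.mem_Icc, Finset.mem_range]; omega)]
  have inner : ∀ x1 ∈ Finset.range (n - m2 + 1),
      (∑ x2 ∈ Finset.Icc m2 (n - x1),
        qFall q (x2 : ℤ) m2 * upmf q β1 β2 n x1 x2 /
          ∏ i ∈ Finset.Icc 1 m2, (1 - β1 * q ^ (n - m2 - x1 + i - 1)))
      = (qFall q (n : ℤ) m2 * β2 ^ m2) *
          (qBinom q (n - m2) x1 * β1 ^ x1 * ominus q β1 (n - m2 - x1)) := by
    intro x1 hx1
    have hx1' : x1 ≤ n - m2 := Nat.lt_succ_iff.mp (Finset.mem_range.mp hx1)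
    rw [← Finset.Ico_add_one_right_eq_Icc, Finset.sum_Ico_eq_sum_range,
      show n - x1 + 1 - m2 = (n - m2 - x1) + 1 by omega]
    have hterm : ∀ y ∈ Finset.range ((n - m2 - x1) + 1),
        qFall q ((m2 + y : ℕ) : ℤ) m2 * upmf q β1 β2 n x1 (m2 + y) /
            ∏ i ∈ Finset.Icc 1 m2, (1 - β1 * q ^ (n - m2 - x1 + i - 1))
        = ((qFall q (n : ℤ) m2 * β2 ^ m2) *
            (qBinom q (n - m2) x1 * β1 ^ x1 * ominus q β1 (n - m2 - x1))) *
          (qBinom q (n - m2 - x1) y * β2 ^ y * ominus q β2 (n - m2 - x1 - y)) := by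
      intro y hy
      have hy' : y ≤ n - m2 - x1 := Nat.lt_succ_iff.mp (Finset.mem_range.mp hy)
      rw [key_term hq0 hq1 hβ1 hβ1' n m2 x1 y hm2 (by omega)]
    rw [Finset.sum_congr rfl hterm, ← Finset.mul_sum, binomS hq0 hq1 β2 (n - m2 - x1), mul_one]
  rw [Finset.sum_congr rfl inner, ← Finset.mul_sum, binomS hq0 hq1 β1 (n - m2), mul_one]
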